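/- arXiv:2310.13111 — 5 statements merged into one kernel-verified Lean document; each statement's English description precedes it below -/
import Mathlib

section
/- For any Hermitian matrix X, the derivative of the matrix exponential at X, Y ↦ d/dε exp(X+εY)|_{ε=0} = ∫₀¹ e^{(1-s)X} Y e^{sX} ds, is an invertible linear map on the space of N×N matrices; in fact its eigenvalues on the basis v_i v_j† (with v_i an orthonormal eigenbasis of X with eigenvalues λ_i) are ∫₀¹ e^{(1-s)λ_i} e^{sλ_j} ds > 0. -/
open Matrix NormedSpace

section Aux

variable {N : ℕ}

private lemma aux_cont (li lj : ℝ) :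
    Continuous (fun s : ℝ => Real.exp ((1 - s) * li) * Real.exp (s * lj)) :=
  (Real.continuous_exp.comp ((continuous_const.sub continuous_id).mul continuous_const)).mul
    (Real.continuous_exp.comp (continuous_id.mul continuous_const))

private lemma aux_Gpos (li lj : ℝ) :
    0 < ∫ s in (0:ℝ)..1, Real.exp ((1 - s) * li) * Real.exp (s * lj) := by
  apply intervalIntegral.intervalIntegral_pos_of_pos
  · exact (aux_cont li lj).intervalIntegrable 0 1
  · intro x
    exact mul_pos (Real.exp_pos _) (Real.exp_pos _)
  · norm_num

private lemma aux_exp (U : Matrix (Fin N) (Fin N) ℂ) (lam : Fin N → ℝ)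
    (hU1 : Uᴴ * U = 1) (hU2 : U * Uᴴ = 1) (t : ℝ)
    (X : Matrix (Fin N) (Fin N) ℂ)
    (hXd : X = U * Matrix.diagonal (fun i => (lam i : ℂ)) * Uᴴ) :
    exp (t • X) = U * Matrix.diagonal (fun i => (Real.exp (t * lam i) : ℂ)) * Uᴴ := by
  have hUinv : U⁻¹ = Uᴴ := Matrix.inv_eq_right_inv hU2
  have hfun : (t • fun i => ((lam i : ℂ))) = fun i => ((t * lam i : ℝ) : ℂ) := by
    ext i; push_cast [Pi.smul_apply, Complex.real_smul]; ring
  have hsmul : t • X = U * Matrix.diagonal (fun i => ((t * lam i : ℝ) : ℂ)) * U⁻¹ := by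
    rw [hXd, hUinv, ← Matrix.smul_mul, ← Matrix.mul_smul, ← Matrix.diagonal_smul, hfun]
  rw [hsmul, Matrix.exp_conj _ _ ⟨⟨U, Uᴴ, hU2, hU1⟩, rfl⟩, hUinv,
    Matrix.exp_diagonal, Pi.exp_def]
  simp [← Complex.exp_eq_exp_ℂ, Complex.ofReal_exp]

private lemma aux_entry (U : Matrix (Fin N) (Fin N) ℂ) (lam : Fin N → ℝ)
    (hU1 : Uᴴ * U = 1) (X : Matrix (Fin N) (Fin N) ℂ)
    (hexp : ∀ t : ℝ, exp (t • X) =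
      U * Matrix.diagonal (fun i => (Real.exp (t * lam i) : ℂ)) * Uᴴ)
    (Z : Matrix (Fin N) (Fin N) ℂ) (s : ℝ) (a b : Fin N) :
    (exp ((1-s) • X) * (U * Z * Uᴴ) * exp (s • X)) a b
      = ∑ p : Fin N × Fin N,
          ((Real.exp ((1-s) * lam p.1) * Real.exp (s * lam p.2) : ℝ) : ℂ) *
          (U a p.1 * Z p.1 p.2 * Uᴴ p.2 b) := by
  rw [hexp, hexp, Fintype.sum_prod_type]
  have key : (U * Matrix.diagonal (fun i => (Real.exp ((1-s) * lam i) : ℂ)) * Uᴴ) * (U * Z * Uᴴ)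
      * (U * Matrix.diagonal (fun i => (Real.exp (s * lam i) : ℂ)) * Uᴴ)
      = U * (Matrix.diagonal (fun i => (Real.exp ((1-s) * lam i) : ℂ)) * Z *
          Matrix.diagonal (fun i => (Real.exp (s * lam i) : ℂ))) * Uᴴ := by
    simp only [mul_assoc]
    rw [← mul_assoc Uᴴ U, hU1, one_mul, ← mul_assoc Uᴴ U, hU1, one_mul]
  rw [key]
  rw [Matrix.mul_apply]
  rw [Finset.sum_comm]
  refine Finset.sum_congr rfl fun j _ => ?_
  rw [Matrix.mul_apply, Finset.sum_mul]
  refine Finset.sum_congr rfl fun i _ => ?_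
  rw [Matrix.mul_diagonal, Matrix.diagonal_mul]
  push_cast
  ring

private lemma aux_L (U : Matrix (Fin N) (Fin N) ℂ) (lam : Fin N → ℝ)
    (X : Matrix (Fin N) (Fin N) ℂ)
    (Z : Matrix (Fin N) (Fin N) ℂ)
    (hentry : ∀ (s : ℝ) (a b : Fin N),
      (exp ((1-s) • X) * (U * Z * Uᴴ) * exp (s • X)) a b
      = ∑ p : Fin N × Fin N,
          ((Real.exp ((1-s) * lam p.1) * Real.exp (s * lam p.2) : ℝ) : ℂ) *
          (U a p.1 * Z p.1 p.2 * Uᴴ p.2 b)) :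
    (Matrix.of fun a b => ∫ s in (0:ℝ)..1,
        (exp ((1-s) • X) * (U * Z * Uᴴ) * exp (s • X)) a b)
      = U * (Matrix.of fun i j =>
          ((∫ s in (0:ℝ)..1, Real.exp ((1-s) * lam i) * Real.exp (s * lam j) : ℝ) : ℂ) * Z i j)
        * Uᴴ := by
  have hint : ∀ (i j : Fin N) (c : ℂ), IntervalIntegrable
      (fun s : ℝ => ((Real.exp ((1-s) * lam i) * Real.exp (s * lam j) : ℝ) : ℂ) * c)
      MeasureTheory.volume 0 1 :=
    fun i j c => ((Complex.continuous_ofReal.comp (aux_cont (lam i) (lam j))).mul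
      continuous_const).intervalIntegrable 0 1
  ext a b
  simp only [Matrix.of_apply, hentry]
  have hstep : (∫ s in (0:ℝ)..1, ∑ p : Fin N × Fin N,
        ((Real.exp ((1-s) * lam p.1) * Real.exp (s * lam p.2) : ℝ) : ℂ) *
          (U a p.1 * Z p.1 p.2 * Uᴴ p.2 b))
      = ∑ p : Fin N × Fin N, ∫ s in (0:ℝ)..1,
        ((Real.exp ((1-s) * lam p.1) * Real.exp (s * lam p.2) : ℝ) : ℂ) *
          (U a p.1 * Z p.1 p.2 * Uᴴ p.2 b) :=
    intervalIntegral.integral_finset_sum (fun p _ => hint p.1 p.2 _)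
  rw [hstep, Fintype.sum_prod_type]
  rw [Matrix.mul_apply]
  rw [Finset.sum_comm]
  refine Finset.sum_congr rfl fun j _ => ?_
  rw [Matrix.mul_apply, Finset.sum_mul]
  refine Finset.sum_congr rfl fun i _ => ?_
  rw [intervalIntegral.integral_mul_const, intervalIntegral.integral_ofReal,
    Matrix.of_apply]
  ring

end Aux

/-- The derivative of the matrix exponential at a Hermitian matrix `X`,
`Y ↦ ∫₀¹ e^{(1-s)X} Y e^{sX} ds`, is an invertible (bijective) linear map on matrices;
its eigenvectors are `vᵢ vⱼ†` (for `vᵢ` an orthonormal eigenbasis of `X` with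
eigenvalues `λᵢ`) with positive eigenvalues `∫₀¹ e^{(1-s)λᵢ} e^{sλⱼ} ds`. -/
theorem deriv_exp_invertible {N : ℕ} (X : Matrix (Fin N) (Fin N) ℂ)
    (hX : X.IsHermitian) (v : Fin N → Fin N → ℂ) (lam : Fin N → ℝ)
    (horth : ∀ i j, star (v i) ⬝ᵥ v j = if i = j then 1 else 0)
    (heig : ∀ i, X *ᵥ v i = (lam i : ℂ) • v i) :
    Function.Bijective (fun Y : Matrix (Fin N) (Fin N) ℂ =>
      Matrix.of fun a b => ∫ s in (0:ℝ)..1,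
        (exp ((1 - s) • X) * Y * exp (s • X)) a b) ∧
    ∀ i j,
      (Matrix.of fun a b => ∫ s in (0:ℝ)..1,
          (exp ((1 - s) • X) * vecMulVec (v i) (star (v j)) * exp (s • X)) a b)
        = (∫ s in (0:ℝ)..1, Real.exp ((1 - s) * lam i) * Real.exp (s * lam j)) •
            vecMulVec (v i) (star (v j)) ∧
      0 < ∫ s in (0:ℝ)..1, Real.exp ((1 - s) * lam i) * Real.exp (s * lam j) := by
  set U : Matrix (Fin N) (Fin N) ℂ := Matrix.of fun a i => v i a with hUdef
  have hU1 : Uᴴ * U = 1 := by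
    ext i j
    simpa [Matrix.mul_apply, Matrix.one_apply, dotProduct, hUdef] using horth i j
  have hU2 : U * Uᴴ = 1 := mul_eq_one_comm.mp hU1
  have hXd : X = U * Matrix.diagonal (fun i => (lam i : ℂ)) * Uᴴ := by
    have h1 : X * U = U * Matrix.diagonal (fun i => (lam i : ℂ)) := by
      ext a j
      have hj := congrFun (heig j) a
      simp only [Matrix.mulVec, dotProduct, Pi.smul_apply, smul_eq_mul] at hj
      rw [Matrix.mul_apply, Matrix.mul_apply]
      simp only [hUdef, Matrix.of_apply, Matrix.diagonal_apply]
      rw [hj]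
      simp [mul_ite, mul_comm]
    calc X = X * (U * Uᴴ) := by rw [hU2, mul_one]
      _ = (X * U) * Uᴴ := by rw [mul_assoc]
      _ = U * Matrix.diagonal (fun i => (lam i : ℂ)) * Uᴴ := by rw [h1]
  have hexp : ∀ t : ℝ, exp (t • X) =
      U * Matrix.diagonal (fun i => (Real.exp (t * lam i) : ℂ)) * Uᴴ :=
    fun t => aux_exp U lam hU1 hU2 t X hXd
  have hL : ∀ Z : Matrix (Fin N) (Fin N) ℂ,
      (Matrix.of fun a b => ∫ s in (0:ℝ)..1,
        (exp ((1-s) • X) * (U * Z * Uᴴ) * exp (s • X)) a b)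
      = U * (Matrix.of fun i j =>
          ((∫ s in (0:ℝ)..1, Real.exp ((1-s) * lam i) * Real.exp (s * lam j) : ℝ) : ℂ) * Z i j)
        * Uᴴ :=
    fun Z => aux_L U lam X Z (fun s a b => aux_entry U lam hU1 X hexp Z s a b)
  have hconj : ∀ Y : Matrix (Fin N) (Fin N) ℂ, U * (Uᴴ * Y * U) * Uᴴ = Y := by
    intro Y
    have h : U * (Uᴴ * Y * U) * Uᴴ = (U * Uᴴ) * Y * (U * Uᴴ) := by
      simp only [mul_assoc]
    rw [h, hU2, one_mul, mul_one]
  have hconj' : ∀ Z : Matrix (Fin N) (Fin N) ℂ, Uᴴ * (U * Z * Uᴴ) * U = Z := by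
    intro Z
    have h : Uᴴ * (U * Z * Uᴴ) * U = (Uᴴ * U) * Z * (Uᴴ * U) := by
      simp only [mul_assoc]
    rw [h, hU1, one_mul, mul_one]
  have hGne : ∀ i j : Fin N,
      ((∫ s in (0:ℝ)..1, Real.exp ((1-s) * lam i) * Real.exp (s * lam j) : ℝ) : ℂ) ≠ 0 :=
    fun i j => Complex.ofReal_ne_zero.mpr (aux_Gpos (lam i) (lam j)).ne'
  constructor
  · -- bijectivity
    rw [Function.bijective_iff_has_inverse]
    refine ⟨fun Y => U * (Matrix.of fun i j =>
        ((∫ s in (0:ℝ)..1, Real.exp ((1-s) * lam i) * Real.exp (s * lam j) : ℝ) : ℂ)⁻¹ *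
        (Uᴴ * Y * U) i j) * Uᴴ, ?_, ?_⟩
    · intro Y
      have h1 : (Matrix.of fun a b => ∫ s in (0:ℝ)..1,
          (exp ((1 - s) • X) * Y * exp (s • X)) a b)
          = U * (Matrix.of fun i j =>
            ((∫ s in (0:ℝ)..1, Real.exp ((1-s) * lam i) * Real.exp (s * lam j) : ℝ) : ℂ) *
            (Uᴴ * Y * U) i j) * Uᴴ := by
        conv_lhs => rw [← hconj Y]
        exact hL (Uᴴ * Y * U)
      simp only [h1]
      rw [hconj']
      have h2 : (Matrix.of fun i j =>
          ((∫ s in (0:ℝ)..1, Real.exp ((1-s) * lam i) * Real.exp (s * lam j) : ℝ) : ℂ)⁻¹ *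
          (Matrix.of fun i j =>
            ((∫ s in (0:ℝ)..1, Real.exp ((1-s) * lam i) * Real.exp (s * lam j) : ℝ) : ℂ) *
            (Uᴴ * Y * U) i j) i j) = Uᴴ * Y * U := by
        ext i j
        rw [Matrix.of_apply, Matrix.of_apply, ← mul_assoc, inv_mul_cancel₀ (hGne i j), one_mul]
      rw [h2, hconj]
    · intro Y
      have h1 := hL (Matrix.of fun i j =>
          ((∫ s in (0:ℝ)..1, Real.exp ((1-s) * lam i) * Real.exp (s * lam j) : ℝ) : ℂ)⁻¹ *
          (Uᴴ * Y * U) i j)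
      simp only [h1]
      have h2 : (Matrix.of fun i j =>
          ((∫ s in (0:ℝ)..1, Real.exp ((1-s) * lam i) * Real.exp (s * lam j) : ℝ) : ℂ) *
          (Matrix.of fun i j =>
            ((∫ s in (0:ℝ)..1, Real.exp ((1-s) * lam i) * Real.exp (s * lam j) : ℝ) : ℂ)⁻¹ *
            (Uᴴ * Y * U) i j) i j) = Uᴴ * Y * U := by
        ext i j
        rw [Matrix.of_apply, Matrix.of_apply, ← mul_assoc, mul_inv_cancel₀ (hGne i j), one_mul]
      rw [h2, hconj]
  · -- eigen equation and positivity
    intro i j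
    refine ⟨?_, aux_Gpos (lam i) (lam j)⟩
    have hE : vecMulVec (v i) (star (v j)) = U * Matrix.single i j 1 * Uᴴ := by
      ext a b
      rw [Matrix.mul_apply]
      simp only [Matrix.conjTranspose_apply, Matrix.mul_apply, hUdef, Matrix.of_apply,
        Matrix.single, Matrix.vecMulVec_apply, Pi.star_apply]
      simp [Finset.mul_sum, Finset.sum_mul, ite_and, mul_ite]
    rw [hE]
    rw [hL (Matrix.single i j 1)]
    have h2 : (Matrix.of fun k l =>
        ((∫ s in (0:ℝ)..1, Real.exp ((1-s) * lam k) * Real.exp (s * lam l) : ℝ) : ℂ) *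
          Matrix.single i j 1 k l)
        = ((∫ s in (0:ℝ)..1, Real.exp ((1-s) * lam i) * Real.exp (s * lam j) : ℝ) : ℂ) •
          Matrix.single i j (1 : ℂ) := by
      ext k l
      by_cases h1 : i = k
      · by_cases h2 : j = l
        · subst h1; subst h2; simp [Matrix.single]
        · simp [Matrix.single, h2]
      · simp [Matrix.single, h1]
    rw [h2]
    rw [Matrix.mul_smul, Matrix.smul_mul]
    have h3 : ∀ (r : ℝ) (M : Matrix (Fin N) (Fin N) ℂ), r • M = (r : ℂ) • M := by
      intro r M
      ext a b
      simp [Complex.real_smul]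
    rw [h3]
end

section
/- If S = {O_1,…,O_n} is a set of linearly independent traceless Hermitian operators on ℂ^N, then E_S has nonempty interior in ℝⁿ and contains the origin as an interior point. -/
open scoped ComplexOrder
open Matrix

lemma herm_dot_im_zero {N : ℕ} {M : Matrix (Fin N) (Fin N) ℂ} (hM : M.IsHermitian)
    (x : Fin N → ℂ) : (star x ⬝ᵥ M *ᵥ x).im = 0 := by
  have h : star (star x ⬝ᵥ M *ᵥ x) = star x ⬝ᵥ M *ᵥ x := by
    conv_lhs => rw [Matrix.star_dotProduct x (M *ᵥ x), star_star]
    rw [star_mulVec, ← Matrix.dotProduct_mulVec, hM.eq]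
  simpa using (Complex.conj_eq_iff_im.mp h)

lemma dot_re_bound {N : ℕ} (H : Matrix (Fin N) (Fin N) ℂ) {δ : ℝ} (hδ0 : 0 ≤ δ)
    (hδ : ∀ a b, ‖H a b‖ ≤ δ) (x : Fin N → ℂ) :
    |(star x ⬝ᵥ H *ᵥ x).re| ≤ δ * (∑ a, ‖x a‖) ^ 2 := by
  have h1 : |(star x ⬝ᵥ H *ᵥ x).re| ≤ ‖star x ⬝ᵥ H *ᵥ x‖ :=
    Complex.abs_re_le_norm _
  refine h1.trans ?_
  have h2 : ‖star x ⬝ᵥ H *ᵥ x‖ ≤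
      ∑ a, ∑ b, ‖x a‖ * (‖H a b‖ * ‖x b‖) := by
    simp only [dotProduct, mulVec, Pi.star_apply]
    refine (norm_sum_le _ _).trans (Finset.sum_le_sum fun a _ => ?_)
    rw [norm_mul, show star (x a) = (starRingEnd ℂ) (x a) from rfl, Complex.norm_conj]
    refine le_trans (mul_le_mul_of_nonneg_left (norm_sum_le _ _) (norm_nonneg _)) ?_
    rw [Finset.mul_sum]
    refine Finset.sum_le_sum fun b _ => ?_
    simp [norm_mul, mul_assoc]
  refine h2.trans ?_
  rw [sq, Finset.sum_mul_sum, Finset.mul_sum]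
  refine Finset.sum_le_sum fun a _ => ?_
  rw [Finset.mul_sum]
  refine Finset.sum_le_sum fun b _ => ?_
  rw [mul_left_comm]
  exact mul_le_mul_of_nonneg_right (hδ a b)
    (mul_nonneg (norm_nonneg _) (norm_nonneg _))

lemma psd_one_add {N : ℕ} [NeZero N] {H : Matrix (Fin N) (Fin N) ℂ} (hH : H.IsHermitian)
    {δ : ℝ} (hδ0 : 0 ≤ δ) (hδN : δ * (N : ℝ) ^ 2 ≤ 1)
    (hδ : ∀ a b, ‖H a b‖ ≤ δ) :
    ((((N : ℂ))⁻¹ • (1 : Matrix (Fin N) (Fin N) ℂ)) + H).PosSemidef := by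
  have hNpos : (0 : ℝ) < (N : ℝ) := by
    exact_mod_cast Nat.pos_of_ne_zero (NeZero.ne N)
  have hherm : ((((N : ℂ))⁻¹ • (1 : Matrix (Fin N) (Fin N) ℂ)) + H).IsHermitian := by
    refine Matrix.IsHermitian.add ?_ hH
    simp [Matrix.IsHermitian, Matrix.conjTranspose_smul, star_inv₀]
  refine Matrix.PosSemidef.of_dotProduct_mulVec_nonneg hherm fun x => ?_
  rw [Complex.le_def]
  constructor
  · simp only [Matrix.add_mulVec, dotProduct_add, Complex.add_re, Complex.zero_re]
    have h1 : (star x ⬝ᵥ (((N : ℂ))⁻¹ • (1 : Matrix (Fin N) (Fin N) ℂ)) *ᵥ x).re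
        = (N : ℝ)⁻¹ * ∑ a, Complex.normSq (x a) := by
      simp only [Matrix.smul_mulVec, Matrix.one_mulVec, dotProduct_smul]
      rw [smul_eq_mul, Complex.mul_re]
      simp only [dotProduct, Pi.star_apply]
      have he : ∀ a : Fin N, star (x a) * x a = (Complex.normSq (x a) : ℂ) := fun a =>
        (Complex.normSq_eq_conj_mul_self).symm
      rw [Finset.sum_congr rfl fun a _ => he a]
      simp [Complex.ofReal_sum]
    rw [h1]
    have hb := dot_re_bound H hδ0 hδ x
    have hcs : (∑ a, ‖x a‖) ^ 2 ≤ (N : ℝ) * ∑ a, ‖x a‖ ^ 2 := by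
      simpa using sq_sum_le_card_mul_sum_sq (s := Finset.univ)
        (f := fun a => ‖x a‖)
    have hsqs : ∑ a, ‖x a‖ ^ 2 = ∑ a, Complex.normSq (x a) :=
      Finset.sum_congr rfl fun a _ => Complex.sq_norm _
    have hS : 0 ≤ ∑ a, Complex.normSq (x a) :=
      Finset.sum_nonneg fun a _ => Complex.normSq_nonneg _
    have h2 : δ * (N : ℝ) ≤ (N : ℝ)⁻¹ := by
      have h3 : δ * (N : ℝ) ^ 2 * (N : ℝ)⁻¹ ≤ 1 * (N : ℝ)⁻¹ :=
        mul_le_mul_of_nonneg_right hδN (inv_pos.mpr hNpos).le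
      have h4 : δ * (N : ℝ) = δ * (N : ℝ) ^ 2 * (N : ℝ)⁻¹ := by
        field_simp
      linarith
    have key : δ * (∑ a, ‖x a‖) ^ 2 ≤ (N : ℝ)⁻¹ * ∑ a, Complex.normSq (x a) := by
      calc δ * (∑ a, ‖x a‖) ^ 2
          ≤ δ * ((N : ℝ) * ∑ a, Complex.normSq (x a)) := by
            refine mul_le_mul_of_nonneg_left ?_ hδ0
            rw [← hsqs]; exact hcs
        _ = (δ * (N : ℝ)) * ∑ a, Complex.normSq (x a) := by ring
        _ ≤ (N : ℝ)⁻¹ * ∑ a, Complex.normSq (x a) :=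
            mul_le_mul_of_nonneg_right h2 hS
    have := (abs_le.mp hb).1
    linarith
  · simp only [Complex.zero_im]
    exact (herm_dot_im_zero hherm x).symm

lemma trace_sum_smul_mul {N n : ℕ} (O : Fin n → Matrix (Fin N) (Fin N) ℂ)
    (t : Fin n → ℝ) (B : Matrix (Fin N) (Fin N) ℂ) :
    (((∑ j, (t j : ℂ) • O j) * B).trace).re = ∑ j, t j * ((O j * B).trace).re := by
  rw [Finset.sum_mul]
  simp only [smul_mul_assoc, Matrix.trace_sum, Matrix.trace_smul, Complex.re_sum]
  exact Finset.sum_congr rfl fun j _ => by simp [Complex.mul_re]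

lemma sum_smul_eq_complex_smul {N n : ℕ} (O : Fin n → Matrix (Fin N) (Fin N) ℂ)
    (t : Fin n → ℝ) : (∑ j, t j • O j) = ∑ j, (t j : ℂ) • O j := by
  refine Finset.sum_congr rfl fun j _ => ?_
  ext a b
  simp [Complex.real_smul]

lemma sum_smul_isHermitian {N n : ℕ} {O : Fin n → Matrix (Fin N) (Fin N) ℂ}
    (hherm : ∀ i, (O i).IsHermitian) (t : Fin n → ℝ) :
    (∑ j, (t j : ℂ) • O j).IsHermitian := by
  unfold Matrix.IsHermitian
  rw [Matrix.conjTranspose_sum]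
  refine Finset.sum_congr rfl fun j _ => ?_
  rw [Matrix.conjTranspose_smul, (hherm j).eq]
  simp

lemma trace_self_re {N : ℕ} {H : Matrix (Fin N) (Fin N) ℂ} (hH : H.IsHermitian) :
    ((H * H).trace).re = ∑ a, ∑ b, Complex.normSq (H a b) := by
  have : H * H = H * Hᴴ := by rw [hH.eq]
  rw [this, Matrix.trace, Complex.re_sum]
  refine Finset.sum_congr rfl fun a _ => ?_
  rw [Matrix.diag_apply, Matrix.mul_apply, Complex.re_sum]
  refine Finset.sum_congr rfl fun b _ => ?_
  rw [Matrix.conjTranspose_apply]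
  rw [show star (H a b) = (starRingEnd ℂ) (H a b) from rfl, Complex.mul_conj]
  simp

/-- The set of joint expectation values of a tuple of Hermitian matrices over all
density matrices. -/
def expVals {N n : ℕ} (O : Fin n → Matrix (Fin N) (Fin N) ℂ) : Set (Fin n → ℝ) :=
  {x | ∃ ρ : Matrix (Fin N) (Fin N) ℂ, ρ.PosSemidef ∧ ρ.trace = 1 ∧
    ∀ i, x i = ((ρ * O i).trace).re}

/-- For linearly independent traceless Hermitian operators, E_S has nonempty
interior and contains the origin as an interior point. -/
theorem expVals_interior_nonempty {N n : ℕ} [NeZero N]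
    (O : Fin n → Matrix (Fin N) (Fin N) ℂ)
    (hherm : ∀ i, (O i).IsHermitian) (htr : ∀ i, (O i).trace = 0)
    (hind : LinearIndependent ℝ O) :
    (0 : Fin n → ℝ) ∈ interior (expVals O) ∧ (interior (expVals O)).Nonempty := by
  classical
  have hN0 : (N : ℂ) ≠ 0 := Nat.cast_ne_zero.mpr (NeZero.ne N)
  have hNpos : (0 : ℝ) < (N : ℝ) := by exact_mod_cast Nat.pos_of_ne_zero (NeZero.ne N)
  set A : Matrix (Fin n) (Fin n) ℝ := Matrix.of (fun i j => ((O j * O i).trace).re) with hA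
  set L : (Fin n → ℝ) →ₗ[ℝ] (Fin n → ℝ) := Matrix.mulVecLin A with hL
  have hLapp : ∀ t i, L t i = ∑ j, t j * ((O j * O i).trace).re := by
    intro t i
    simp only [hL, Matrix.mulVecLin_apply, Matrix.mulVec, dotProduct, hA, Matrix.of_apply]
    exact Finset.sum_congr rfl fun j _ => mul_comm _ _
  -- injectivity of L
  have hinj : Function.Injective L := by
    rw [← LinearMap.ker_eq_bot, LinearMap.ker_eq_bot']
    intro t ht
    have hre : ∀ i, (((∑ j, (t j : ℂ) • O j) * O i).trace).re = 0 := by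
      intro i
      rw [trace_sum_smul_mul, ← hLapp t i, ht]
      rfl
    have hHH : (((∑ j, (t j : ℂ) • O j) * (∑ j, (t j : ℂ) • O j)).trace).re = 0 := by
      rw [trace_sum_smul_mul]
      refine Finset.sum_eq_zero fun j _ => ?_
      rw [Matrix.trace_mul_comm, hre j, mul_zero]
    have hH0 : (∑ j, (t j : ℂ) • O j) = 0 := by
      have h2 := trace_self_re (sum_smul_isHermitian hherm t)
      rw [hHH] at h2
      ext a b
      have ha := (Finset.sum_eq_zero_iff_of_nonneg
        (fun a _ => Finset.sum_nonneg fun b _ => Complex.normSq_nonneg _)).mp h2.symm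
        a (Finset.mem_univ a)
      have hb := (Finset.sum_eq_zero_iff_of_nonneg
        (fun b _ => Complex.normSq_nonneg _)).mp ha b (Finset.mem_univ b)
      simpa using Complex.normSq_eq_zero.mp hb
    have hz := Fintype.linearIndependent_iff.mp hind t
      (by rw [sum_smul_eq_complex_smul, hH0])
    funext i
    exact hz i
  have hsurj : Function.Surjective L := LinearMap.injective_iff_surjective.mp hinj
  have hopen : IsOpenMap L := by
    have := (LinearEquiv.ofBijective L ⟨hinj, hsurj⟩).toContinuousLinearEquiv.toHomeomorph.isOpenMap
    exact this
  -- constants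
  set C : ℝ := 1 + ∑ j, ∑ a, ∑ b, ‖O j a b‖ with hC
  have hCpos : (0 : ℝ) < C := by
    have : (0:ℝ) ≤ ∑ j, ∑ a, ∑ b, ‖O j a b‖ := by positivity
    linarith
  set ε : ℝ := ((N : ℝ) ^ 2 * C)⁻¹ with hε
  have hεpos : 0 < ε := by positivity
  -- image of ball is inside expVals
  have hsub : L '' Metric.ball 0 ε ⊆ expVals O := by
    rintro _ ⟨t, ht, rfl⟩
    have htj : ∀ j, |t j| ≤ ε := by
      intro j
      have h1 : ‖t‖ < ε := by simpa [dist_zero_right] using Metric.mem_ball.mp ht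
      have h2 : ‖t j‖ ≤ ‖t‖ := norm_le_pi_norm t j
      rw [Real.norm_eq_abs] at h2
      linarith
    set H : Matrix (Fin N) (Fin N) ℂ := ∑ j, (t j : ℂ) • O j with hH
    have hent : ∀ a b, ‖H a b‖ ≤ ε * C := by
      intro a b
      rw [hH]
      simp only [Matrix.sum_apply, Matrix.smul_apply, smul_eq_mul]
      refine (norm_sum_le _ _).trans ?_
      have hbound : ∀ j : Fin n, ‖(t j : ℂ) * O j a b‖ ≤ ε * ‖O j a b‖ := by
        intro j
        rw [norm_mul, Complex.norm_real, Real.norm_eq_abs]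
        exact mul_le_mul_of_nonneg_right (htj j) (norm_nonneg _)
      refine (Finset.sum_le_sum fun j _ => hbound j).trans ?_
      rw [← Finset.mul_sum]
      refine mul_le_mul_of_nonneg_left ?_ hεpos.le
      have hjC : ∀ j : Fin n, ‖O j a b‖ ≤ ∑ a', ∑ b', ‖O j a' b'‖ := by
        intro j
        refine le_trans ?_ (Finset.single_le_sum (f := fun a' => ∑ b', ‖O j a' b'‖)
          (fun a' _ => Finset.sum_nonneg fun b' _ => norm_nonneg _) (Finset.mem_univ a))
        exact Finset.single_le_sum (f := fun b' => ‖O j a b'‖)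
          (fun b' _ => norm_nonneg _) (Finset.mem_univ b)
      refine (Finset.sum_le_sum fun j _ => hjC j).trans ?_
      rw [hC]
      linarith
    have hδN : (ε * C) * (N : ℝ) ^ 2 ≤ 1 := by
      have heq : ((N : ℝ) ^ 2 * C)⁻¹ * C * (N : ℝ) ^ 2 = 1 := by
        field_simp
      rw [hε, heq]
    have hpsd := psd_one_add (sum_smul_isHermitian hherm t) (by positivity) hδN hent
    refine ⟨((N : ℂ))⁻¹ • (1 : Matrix (Fin N) (Fin N) ℂ) + H, hpsd, ?_, ?_⟩
    · rw [Matrix.trace_add, Matrix.trace_smul, Matrix.trace_one, hH, Matrix.trace_sum]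
      simp only [Matrix.trace_smul, htr, smul_zero, Finset.sum_const_zero, add_zero]
      simp [smul_eq_mul, inv_mul_cancel₀ hN0]
    · intro i
      rw [Matrix.add_mul, Matrix.smul_mul, Matrix.one_mul, Matrix.trace_add, Matrix.trace_smul,
        htr i, smul_zero, zero_add, hH, trace_sum_smul_mul, hLapp]
  have hball : IsOpen (L '' Metric.ball 0 ε) := hopen _ Metric.isOpen_ball
  have h0mem : (0 : Fin n → ℝ) ∈ L '' Metric.ball 0 ε :=
    ⟨0, Metric.mem_ball_self hεpos, map_zero L⟩
  have hint := interior_maximal hsub hball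
  exact ⟨hint h0mem, ⟨0, hint h0mem⟩⟩
end

section
/- For a set S of n linearly independent traceless Hermitian operators on ℂ^N, E_S equals the intersection over all unit vectors ê ∈ ℝⁿ of the half-spaces { x ∈ ℝⁿ : ê·x ≥ λ_min(ê·O) }, where ê·O = Σᵢ êᵢ Oᵢ. -/
open scoped ComplexOrder
open Matrix

/-- The smallest eigenvalue of a Hermitian matrix. -/
noncomputable def minEig {N : ℕ} [NeZero N] {A : Matrix (Fin N) (Fin N) ℂ}
    (hA : A.IsHermitian) : ℝ :=
  Finset.univ.inf' Finset.univ_nonempty hA.eigenvalues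

/-! ### Auxiliary lemmas -/

lemma auxTraceMulDiagonal {N : ℕ} (M : Matrix (Fin N) (Fin N) ℂ) (d : Fin N → ℂ) :
    (M * diagonal d).trace = ∑ k, M k k * d k := by
  simp [Matrix.trace, Matrix.mul_apply, Matrix.diagonal_apply, Finset.sum_ite_eq]

lemma auxDiagNonneg {N : ℕ} {ρ : Matrix (Fin N) (Fin N) ℂ} (hρ : ρ.PosSemidef) (k : Fin N) :
    0 ≤ ρ k k := by
  simpa [dotProduct, Pi.single_apply] using hρ.dotProduct_mulVec_nonneg (Pi.single k 1)

lemma auxMinEigLe {N : ℕ} [NeZero N] {A ρ : Matrix (Fin N) (Fin N) ℂ}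
    (hA : A.IsHermitian) (hρ : ρ.PosSemidef) (htr : ρ.trace = 1) :
    minEig hA ≤ ((ρ * A).trace).re := by
  have hUU : (hA.eigenvectorUnitary : Matrix (Fin N) (Fin N) ℂ) *
      star (hA.eigenvectorUnitary : Matrix (Fin N) (Fin N) ℂ) = 1 :=
    (Matrix.mem_unitaryGroup_iff).mp hA.eigenvectorUnitary.2
  set U : Matrix (Fin N) (Fin N) ℂ := (hA.eigenvectorUnitary : Matrix (Fin N) (Fin N) ℂ) with hU
  set σ := star U * ρ * U with hσdef
  have hσ : σ.PosSemidef := by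
    rw [hσdef]
    simpa [Matrix.star_eq_conjTranspose] using hρ.conjTranspose_mul_mul_same U
  have hσtr : σ.trace = 1 := by
    rw [hσdef, trace_mul_cycle, hUU, one_mul, htr]
  have key : (ρ * A).trace = ∑ k, σ k k * (hA.eigenvalues k : ℂ) := by
    conv_lhs => rw [hA.spectral_theorem, Unitary.conjStarAlgAut_apply]
    simp only [← mul_assoc, ← hU, Unitary.coe_star]
    rw [trace_mul_comm]
    simp only [← mul_assoc, ← hσdef]
    rw [auxTraceMulDiagonal]
    rfl
  have hre : ((ρ * A).trace).re = ∑ k, (σ k k).re * hA.eigenvalues k := by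
    rw [key, Complex.re_sum]
    congr 1; ext k
    simp [Complex.mul_re]
  rw [hre]
  have h1 : ∑ k, (σ k k).re = 1 := by
    have := congrArg Complex.re hσtr
    simpa [Matrix.trace, Complex.re_sum] using this
  calc minEig hA = ∑ k, (σ k k).re * minEig hA := by rw [← Finset.sum_mul, h1, one_mul]
    _ ≤ ∑ k, (σ k k).re * hA.eigenvalues k := by
        apply Finset.sum_le_sum
        intro k _
        have hk : 0 ≤ (σ k k).re := ((Complex.le_def).mp (auxDiagNonneg hσ k)).1
        exact mul_le_mul_of_nonneg_left (Finset.inf'_le _ (Finset.mem_univ k)) hk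

lemma auxExistsMinRho {N : ℕ} [NeZero N] {A : Matrix (Fin N) (Fin N) ℂ} (hA : A.IsHermitian) :
    ∃ ρ : Matrix (Fin N) (Fin N) ℂ, ρ.PosSemidef ∧ ρ.trace = 1 ∧
      (ρ * A).trace = (minEig hA : ℂ) := by
  obtain ⟨k₀, -, hk₀⟩ := Finset.exists_mem_eq_inf' (Finset.univ_nonempty (α := Fin N))
    hA.eigenvalues
  have hUU' : star (hA.eigenvectorUnitary : Matrix (Fin N) (Fin N) ℂ) *
      (hA.eigenvectorUnitary : Matrix (Fin N) (Fin N) ℂ) = 1 :=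
    (Matrix.mem_unitaryGroup_iff').mp hA.eigenvectorUnitary.2
  set U : Matrix (Fin N) (Fin N) ℂ := (hA.eigenvectorUnitary : Matrix (Fin N) (Fin N) ℂ) with hU
  set E : Matrix (Fin N) (Fin N) ℂ := diagonal (Pi.single k₀ 1) with hE
  have hEpsd : E.PosSemidef := by
    refine Matrix.PosSemidef.diagonal ?_
    intro i
    by_cases h : i = k₀ <;> simp [Pi.single_apply, h]
  refine ⟨U * E * star U, ?_, ?_, ?_⟩
  · simpa [Matrix.star_eq_conjTranspose] using hEpsd.mul_mul_conjTranspose_same U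
  · rw [trace_mul_cycle, hUU', one_mul, hE, trace_diagonal]
    simp [Pi.single_apply]
  · have hdiag : star U * A * U = diagonal (RCLike.ofReal ∘ hA.eigenvalues) :=
      by have := hA.conjStarAlgAut_star_eigenvectorUnitary; rwa [Unitary.conjStarAlgAut_star_apply] at this
    rw [trace_mul_comm, ← mul_assoc, trace_mul_cycle, ← mul_assoc, hdiag, hE]
    simp [diagonal_mul_diagonal, trace_diagonal, Pi.single_apply, hk₀]
    exact hk₀.symm

lemma auxQuadForm {N : ℕ} {ρ : Matrix (Fin N) (Fin N) ℂ} (hρ : ρ.PosSemidef) (i j : Fin N)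
    (μ : ℂ) :
    0 ≤ ρ i i + μ * ρ i j + (starRingEnd ℂ) μ * ρ j i + (starRingEnd ℂ) μ * μ * ρ j j := by
  have h := hρ.dotProduct_mulVec_nonneg (fun a => (if a = i then 1 else 0) + (if a = j then μ else 0))
  simp only [dotProduct, mulVec, Pi.star_apply, star_add, mul_add, add_mul, ite_mul, mul_ite,
    mul_zero, zero_mul, mul_one, one_mul, Finset.sum_add_distrib, Finset.sum_ite_eq',
    Finset.mem_univ, if_true, apply_ite (star : ℂ → ℂ), star_zero, star_one,
    Complex.star_def] at h
  convert h using 1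
  ring

lemma auxEntryBound {N : ℕ} {ρ : Matrix (Fin N) (Fin N) ℂ} (hρ : ρ.PosSemidef)
    (htr : ρ.trace = 1) (i j : Fin N) : ‖ρ i j‖ ≤ 2 := by
  have hd : ∀ k, 0 ≤ (ρ k k).re := fun k => (Complex.le_def.mp (auxDiagNonneg hρ k)).1
  have hsum : ∑ k, (ρ k k).re = 1 := by
    have := congrArg Complex.re htr
    simpa [Matrix.trace, Complex.re_sum] using this
  have hle1 : ∀ k, (ρ k k).re ≤ 1 := by
    intro k
    rw [← hsum]
    exact Finset.single_le_sum (fun k _ => hd k) (Finset.mem_univ k)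
  have hji : ρ j i = (starRingEnd ℂ) (ρ i j) := by
    conv_lhs => rw [← hρ.1]
    simp [Matrix.conjTranspose_apply]
  have key : ∀ μ : ℂ, (starRingEnd ℂ) μ * μ = 1 → -1 ≤ (μ * ρ i j).re := by
    intro μ hμ
    have h := auxQuadForm hρ i j μ
    rw [hμ, one_mul, hji] at h
    have hre := (Complex.le_def.mp h).1
    simp only [Complex.add_re, Complex.zero_re, ← _root_.map_mul, Complex.conj_re] at hre
    have h1 := hle1 i
    have h2 := hle1 j
    linarith
  have k1 := key 1 (by simp)
  have k2 := key (-1) (by simp)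
  have k3 := key Complex.I (by simp [Complex.conj_I, Complex.I_mul_I])
  have k4 := key (-Complex.I) (by simp [Complex.conj_I, Complex.I_mul_I])
  simp only [one_mul, neg_mul, Complex.neg_re, Complex.I_mul, Complex.mul_re, Complex.I_re,
    Complex.I_im, zero_mul, one_mul, zero_sub, neg_neg] at k1 k2 k3 k4
  calc ‖ρ i j‖ ≤ |(ρ i j).re| + |(ρ i j).im| := Complex.norm_le_abs_re_add_abs_im _
    _ ≤ 1 + 1 := by
        gcongr <;> rw [abs_le] <;> constructor <;> linarith
    _ = 2 := by norm_num

/-- Linearity of the expectation functional. -/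
lemma auxLinComb {N n : ℕ} (O : Fin n → Matrix (Fin N) (Fin N) ℂ)
    (ρ : Matrix (Fin N) (Fin N) ℂ) (e : Fin n → ℝ) :
    ((ρ * ∑ i, e i • O i).trace).re = ∑ i, e i * ((ρ * O i).trace).re := by
  rw [Matrix.mul_sum, Matrix.trace_sum, Complex.re_sum]
  congr 1; ext i
  rw [Matrix.mul_smul, Matrix.trace_smul]
  simp [Complex.real_smul, Complex.mul_re]

attribute [local instance] Matrix.normedAddCommGroup Matrix.normedSpace

lemma auxCompact {N : ℕ} :
    IsCompact {ρ : Matrix (Fin N) (Fin N) ℂ | ρ.PosSemidef ∧ ρ.trace = 1} := by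
  letI := Complex.orderClosedTopology
  apply Metric.isCompact_of_isClosed_isBounded
  · have h1 : IsClosed {ρ : Matrix (Fin N) (Fin N) ℂ | ρ.IsHermitian} :=
      isClosed_eq (continuous_id.matrix_conjTranspose) continuous_id
    have h2 : ∀ x : Fin N → ℂ, IsClosed {ρ : Matrix (Fin N) (Fin N) ℂ | 0 ≤ star x ⬝ᵥ ρ *ᵥ x} :=
      fun x => isClosed_le continuous_const
        (continuous_const.dotProduct (continuous_id.matrix_mulVec continuous_const))
    have h3 : IsClosed {ρ : Matrix (Fin N) (Fin N) ℂ | ρ.trace = 1} :=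
      isClosed_eq (continuous_id.matrix_trace) continuous_const
    have hset : {ρ : Matrix (Fin N) (Fin N) ℂ | ρ.PosSemidef ∧ ρ.trace = 1}
        = ({ρ | ρ.IsHermitian} ∩ ⋂ x, {ρ | 0 ≤ star x ⬝ᵥ ρ *ᵥ x}) ∩ {ρ | ρ.trace = 1} := by
      ext ρ
      simp only [Set.mem_setOf_eq, Set.mem_inter_iff, Set.mem_iInter]
      rw [Matrix.posSemidef_iff_dotProduct_mulVec]
    rw [hset]
    exact (h1.inter (isClosed_iInter h2)).inter h3
  · apply (Metric.isBounded_closedBall (x := (0 : Matrix (Fin N) (Fin N) ℂ)) (r := 2)).subset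
    intro ρ hρ
    rw [Metric.mem_closedBall, dist_zero_right, Matrix.norm_le_iff (by norm_num)]
    intro i j
    exact auxEntryBound hρ.1 hρ.2 i j

lemma auxClosed {N n : ℕ} (O : Fin n → Matrix (Fin N) (Fin N) ℂ) :
    IsClosed (expVals O) := by
  have himg : expVals O = (fun ρ : Matrix (Fin N) (Fin N) ℂ =>
      fun i => ((ρ * O i).trace).re) '' {ρ | ρ.PosSemidef ∧ ρ.trace = 1} := by
    ext x
    constructor
    · rintro ⟨ρ, h1, h2, h3⟩
      exact ⟨ρ, ⟨h1, h2⟩, by ext i; exact (h3 i).symm⟩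
    · rintro ⟨ρ, ⟨h1, h2⟩, h3⟩
      exact ⟨ρ, h1, h2, fun i => congrFun h3.symm i⟩
  rw [himg]
  apply (auxCompact.image ?_).isClosed
  exact continuous_pi fun i =>
    Complex.continuous_re.comp ((continuous_id.matrix_mul continuous_const).matrix_trace)

lemma auxConvex {N n : ℕ} (O : Fin n → Matrix (Fin N) (Fin N) ℂ) :
    Convex ℝ (expVals O) := by
  rintro x ⟨ρ₁, hp1, ht1, hx1⟩ y ⟨ρ₂, hp2, ht2, hy2⟩ a b ha hb hab
  have hsmul : ∀ (c : ℝ), 0 ≤ c → ∀ {ρ : Matrix (Fin N) (Fin N) ℂ}, ρ.PosSemidef →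
      (c • ρ).PosSemidef := by
    intro c hc ρ hρ
    refine Matrix.PosSemidef.of_dotProduct_mulVec_nonneg ?_ ?_
    · unfold Matrix.IsHermitian
      rw [Matrix.conjTranspose_smul, hρ.1]
      congr 1
    · intro v
      have h := hρ.dotProduct_mulVec_nonneg v
      rw [Matrix.smul_mulVec, dotProduct_smul]
      rw [Complex.le_def] at h ⊢
      constructor
      · simpa [Complex.smul_re] using mul_nonneg hc h.1
      · simpa [Complex.smul_im] using Or.inr h.2.symm
  refine ⟨a • ρ₁ + b • ρ₂, (hsmul a ha hp1).add (hsmul b hb hp2), ?_, ?_⟩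
  · rw [Matrix.trace_add, Matrix.trace_smul, Matrix.trace_smul, ht1, ht2]
    simp only [smul_eq_mul, mul_one, Complex.real_smul, mul_one]
    norm_cast
  · intro i
    rw [Matrix.add_mul, Matrix.trace_add, Matrix.smul_mul, Matrix.smul_mul,
      Matrix.trace_smul, Matrix.trace_smul]
    simp only [Pi.add_apply, Pi.smul_apply, smul_eq_mul, Complex.add_re, Complex.real_smul,
      Complex.mul_re, Complex.ofReal_re, Complex.ofReal_im, zero_mul, sub_zero]
    rw [hx1 i, hy2 i]

/-- For linearly independent traceless Hermitian operators, E_S equals the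
intersection over all unit vectors ê ∈ ℝⁿ of the half-spaces
`{x | ê·x ≥ λ_min(ê·O)}`. -/
theorem expVals_eq_iInter_halfSpaces {N n : ℕ} [NeZero N]
    (O : Fin n → Matrix (Fin N) (Fin N) ℂ)
    (hherm : ∀ i, (O i).IsHermitian) (htr : ∀ i, (O i).trace = 0)
    (hind : LinearIndependent ℝ O)
    (hsum : ∀ e : Fin n → ℝ, (∑ i, e i • O i).IsHermitian) :
    expVals O =
      ⋂ e ∈ {e : Fin n → ℝ | ∑ i, (e i) ^ 2 = 1},
        {x : Fin n → ℝ | minEig (hsum e) ≤ e ⬝ᵥ x} := by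
  -- a point of expVals O achieving the minimal eigenvalue in direction e
  have hachieve : ∀ e : Fin n → ℝ, ∃ a ∈ expVals O, e ⬝ᵥ a = minEig (hsum e) := by
    intro e
    obtain ⟨ρ, hρ, htrρ, hmin⟩ := auxExistsMinRho (hsum e)
    refine ⟨fun i => ((ρ * O i).trace).re, ⟨ρ, hρ, htrρ, fun i => rfl⟩, ?_⟩
    have := auxLinComb O ρ e
    rw [hmin] at this
    simp only [Complex.ofReal_re] at this
    simpa [dotProduct] using this.symm
  apply Set.Subset.antisymm
  · rintro x ⟨ρ, hρ, htrρ, hx⟩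
    simp only [Set.mem_iInter, Set.mem_setOf_eq]
    intro e he
    have h1 : e ⬝ᵥ x = ((ρ * ∑ i, e i • O i).trace).re := by
      rw [auxLinComb O ρ e]
      simp only [dotProduct]
      congr 1; ext i; rw [hx i]
    rw [h1]
    exact auxMinEigLe (hsum e) hρ htrρ
  · intro x hx
    by_contra hxE
    obtain ⟨f, u, hfa, hfx⟩ :=
      geometric_hahn_banach_closed_point (auxConvex O) (auxClosed O) hxE
    set v : Fin n → ℝ := fun i => f (Pi.single i 1) with hv
    have hfv : ∀ y : Fin n → ℝ, f y = ∑ i, y i * v i := by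
      intro y
      have hy : y = ∑ i, y i • (Pi.single i 1 : Fin n → ℝ) := by
        funext j
        simp [Pi.single_apply, Finset.sum_ite_eq']
      conv_lhs => rw [hy]
      rw [map_sum]
      congr 1; ext i
      rw [f.map_smul]
      rfl
    -- v ≠ 0
    obtain ⟨a₀, ha₀, -⟩ := hachieve 0
    have hfa₀ : f a₀ < f x := lt_trans (hfa a₀ ha₀) hfx
    have hvne : ∑ i, v i ^ 2 ≠ 0 := by
      intro h0
      have hz : ∀ i, v i = 0 := by
        intro i
        have := (Finset.sum_eq_zero_iff_of_nonneg
          (fun i _ => sq_nonneg (v i))).mp h0 i (Finset.mem_univ i)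
        exact pow_eq_zero_iff (n := 2) (by norm_num) |>.mp this
      have : f a₀ = f x := by
        rw [hfv, hfv]
        simp [hz]
      exact absurd this (ne_of_lt hfa₀)
    have hvpos : 0 < ∑ i, v i ^ 2 :=
      lt_of_le_of_ne (Finset.sum_nonneg fun i _ => sq_nonneg (v i)) (Ne.symm hvne)
    set s := Real.sqrt (∑ i, v i ^ 2) with hs
    have hspos : 0 < s := Real.sqrt_pos.mpr hvpos
    set e : Fin n → ℝ := fun i => (-(1 / s)) * v i with he
    have hunit : ∑ i, e i ^ 2 = 1 := by
      simp only [he, mul_pow]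
      rw [← Finset.mul_sum]
      rw [show (-(1/s))^2 = 1/s^2 by ring, hs, Real.sq_sqrt hvpos.le]
      field_simp
    have hxe : minEig (hsum e) ≤ e ⬝ᵥ x := by
      have := Set.mem_iInter.mp hx e
      have := Set.mem_iInter.mp this hunit
      exact this
    obtain ⟨a₁, ha₁, hea₁⟩ := hachieve e
    have hfa₁ : f a₁ < f x := lt_trans (hfa a₁ ha₁) hfx
    have hdot : ∀ y : Fin n → ℝ, e ⬝ᵥ y = (-(1/s)) * f y := by
      intro y
      rw [hfv y, dotProduct, Finset.mul_sum]
      congr 1; ext i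
      rw [he]; ring
    have hlt : e ⬝ᵥ x < e ⬝ᵥ a₁ := by
      rw [hdot x, hdot a₁]
      have hneg : -(1/s) < 0 := by
        simp only [neg_neg, neg_lt, neg_zero]
        positivity
      exact (mul_lt_mul_left_of_neg hneg).mpr hfa₁
    rw [hea₁] at hlt
    exact absurd hxe (not_le.mpr hlt)
end

section
/- Let f : ℝⁿ → ℝⁿ be continuously differentiable with Jacobian J(x) positive definite (symmetric) at every point. Then f is injective; indeed for x₁ ≠ x₂, (x₂ − x₁)·(f(x₂) − f(x₁)) > 0. -/
open Matrix

/-- If f : ℝⁿ → ℝⁿ is C¹ with symmetric, positive definite Jacobian everywhere,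
then f is injective; indeed (x₂−x₁)·(f(x₂)−f(x₁)) > 0 for x₁ ≠ x₂. -/
theorem injective_of_posdef_jacobian {n : ℕ}
    (f : (Fin n → ℝ) → (Fin n → ℝ))
    (hf : ContDiff ℝ 1 f)
    (hsym : ∀ x u w, u ⬝ᵥ fderiv ℝ f x w = w ⬝ᵥ fderiv ℝ f x u)
    (hpos : ∀ x v, v ≠ 0 → 0 < v ⬝ᵥ fderiv ℝ f x v) :
    Function.Injective f ∧
      ∀ x₁ x₂, x₁ ≠ x₂ → 0 < (x₂ - x₁) ⬝ᵥ (f x₂ - f x₁) := by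
  have key : ∀ x₁ x₂ : Fin n → ℝ, x₁ ≠ x₂ → 0 < (x₂ - x₁) ⬝ᵥ (f x₂ - f x₁) := by
    intro x₁ x₂ hne
    set v : Fin n → ℝ := x₂ - x₁ with hv
    have hv0 : v ≠ 0 := sub_ne_zero.mpr (Ne.symm hne)
    set γ : ℝ → (Fin n → ℝ) := fun t => x₁ + t • v with hγ
    have hpath : ∀ t : ℝ, HasDerivAt γ v t := by
      intro t
      simpa [hγ] using ((hasDerivAt_id t).smul_const v).const_add x₁
    set φ : ℝ → ℝ := fun t => v ⬝ᵥ f (γ t) with hφ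
    have hder : ∀ t : ℝ, HasDerivAt φ (v ⬝ᵥ fderiv ℝ f (γ t) v) t := by
      intro t
      have hfd : HasFDerivAt f (fderiv ℝ f (γ t)) (γ t) :=
        (hf.differentiable one_ne_zero (γ t)).hasFDerivAt
      have hcomp : HasDerivAt (fun t => f (γ t)) (fderiv ℝ f (γ t) v) t :=
        hfd.comp_hasDerivAt t (hpath t)
      have : HasDerivAt (fun t => ∑ i, v i * f (γ t) i)
          (∑ i, v i * (fderiv ℝ f (γ t) v) i) t := by
        apply HasDerivAt.fun_sum
        intro i _
        have hcomp_i : HasDerivAt (fun t => f (γ t) i) ((fderiv ℝ f (γ t) v) i) t :=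
          ((ContinuousLinearMap.proj i : ((Fin n → ℝ) →L[ℝ] ℝ)).hasFDerivAt).comp_hasDerivAt
            t hcomp
        exact hcomp_i.const_mul (v i)
      simpa [hφ, dotProduct] using this
    have hmono : StrictMono φ :=
      strictMono_of_hasDerivAt_pos hder (fun t => hpos (γ t) v hv0)
    have h01 : φ 0 < φ 1 := hmono zero_lt_one
    have hγ0 : γ 0 = x₁ := by simp [hγ]
    have hγ1 : γ 1 = x₂ := by simp [hγ, hv]
    have : v ⬝ᵥ f x₁ < v ⬝ᵥ f x₂ := by
      simpa [hφ, hγ0, hγ1] using h01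
    have := sub_pos.mpr this
    simpa [dotProduct_sub] using this
  refine ⟨?_, key⟩
  intro a b hab
  by_contra hne
  have := key a b hne
  rw [hab] at this
  simp at this
end

section
/- Let {O_i} be a basis of the traceless Hermitian N×N matrices and x ∈ ℝⁿ (n = N²−1). Define ρ_x = 𝟙/N + Σᵢ xᵢ Õᵢ, where {Õᵢ} is the dual basis with tr(O_i Õ_j) = δ_{ij}. If the matrix M_{ij}(x) = tr(ρ_x O_i O_j) − xᵢ xⱼ is positive semidefinite, then ρ_x is positive semidefinite, i.e., ρ_x is a valid density matrix with tr(ρ_x O_i) = x_i. -/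
open scoped ComplexOrder
open Matrix

lemma trace_mul_vecMulVec' {N : ℕ} (A : Matrix (Fin N) (Fin N) ℂ) (v w : Fin N → ℂ) :
    (A * Matrix.vecMulVec v w).trace = w ⬝ᵥ (A *ᵥ v) := by
  simp only [Matrix.trace, Matrix.diag, Matrix.mul_apply, Matrix.vecMulVec_apply,
    dotProduct, Matrix.mulVec, Finset.mul_sum]
  exact Finset.sum_congr rfl fun i _ => Finset.sum_congr rfl fun j _ => by ring

lemma vecMulVec_mul_vecMulVec' {N : ℕ} (v : Fin N → ℂ) :
    Matrix.vecMulVec v (star v) * Matrix.vecMulVec v (star v)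
      = (star v ⬝ᵥ v) • Matrix.vecMulVec v (star v) := by
  ext i j
  simp only [Matrix.mul_apply, Matrix.vecMulVec_apply, Matrix.smul_apply, dotProduct,
    Finset.sum_mul, smul_eq_mul, Pi.star_apply]
  exact Finset.sum_congr rfl fun k _ => by ring

/-- Let {Oᵢ} be a basis of the traceless Hermitian N×N matrices with dual basis
{Õᵢ} (tr(Oᵢ Õⱼ) = δᵢⱼ), and ρ_x = 𝟙/N + Σᵢ xᵢ Õᵢ. If the matrix
M_{ij}(x) = tr(ρ_x Oᵢ Oⱼ) − xᵢxⱼ is positive semidefinite, then ρ_x is a valid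
density matrix with tr(ρ_x Oᵢ) = xᵢ. -/
theorem posSemidef_of_covariance_posSemidef {N n : ℕ} [NeZero N]
    (O Od : Fin n → Matrix (Fin N) (Fin N) ℂ)
    (hO : ∀ i, (O i).IsHermitian) (hOtr : ∀ i, (O i).trace = 0)
    (hind : LinearIndependent ℝ O)
    (hspan : ∀ A : Matrix (Fin N) (Fin N) ℂ, A.IsHermitian → A.trace = 0 →
      ∃ c : Fin n → ℝ, A = ∑ i, c i • O i)
    (hd : ∀ i, (Od i).IsHermitian) (hdtr : ∀ i, (Od i).trace = 0)
    (hdual : ∀ i j, (O i * Od j).trace = if i = j then 1 else 0)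
    (x : Fin n → ℝ)
    (ρx : Matrix (Fin N) (Fin N) ℂ)
    (hρx : ρx = (N : ℂ)⁻¹ • (1 : Matrix (Fin N) (Fin N) ℂ) + ∑ k, x k • Od k)
    (hM : Matrix.PosSemidef (Matrix.of fun i j : Fin n =>
      (ρx * O i * O j).trace - (x i : ℂ) * (x j : ℂ))) :
    ρx.PosSemidef ∧ ρx.trace = 1 ∧ ∀ i, (ρx * O i).trace = (x i : ℂ) := by
  have hN : (N : ℂ) ≠ 0 := Nat.cast_ne_zero.mpr (NeZero.ne N)
  -- trace ρ = 1
  have htr : ρx.trace = 1 := by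
    rw [hρx]
    simp [Matrix.trace_add, Matrix.trace_smul, Matrix.trace_one, Matrix.trace_sum, hdtr,
      inv_mul_cancel₀ hN]
  -- tr(ρ O i) = x i
  have hxi : ∀ i, (ρx * O i).trace = (x i : ℂ) := by
    intro i
    have h2 : ∀ k, (Od k * O i).trace = if i = k then 1 else 0 := fun k => by
      rw [Matrix.trace_mul_comm, hdual]
    rw [hρx, add_mul, Finset.sum_mul]
    simp [Matrix.trace_add, Matrix.trace_sum, Matrix.smul_mul, Matrix.trace_smul, hOtr i, h2]
  -- ρ is Hermitian
  have hherm : ρx.IsHermitian := by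
    rw [hρx]
    simp [Matrix.IsHermitian, Matrix.conjTranspose_add, Matrix.conjTranspose_smul,
      Matrix.conjTranspose_sum, Matrix.conjTranspose_one, (hd _).eq, Complex.conj_ofReal,
      star_inv₀]
  refine ⟨PosSemidef.of_dotProduct_mulVec_nonneg hherm fun v => ?_, htr, hxi⟩
  by_cases hv : v = 0
  · simp [hv]
  -- the squared norm of v
  set s : ℝ := ∑ i, Complex.normSq (v i) with hs
  have hsC : star v ⬝ᵥ v = (s : ℂ) := by
    simp [dotProduct, hs, Complex.ofReal_sum]
    exact Finset.sum_congr rfl fun i _ => by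
      rw [mul_comm]; exact (Complex.mul_conj (v i))
  have hspos : 0 < s := by
    have : ∃ i, v i ≠ 0 := by
      by_contra h
      push_neg at h
      exact hv (funext h)
    obtain ⟨i, hi⟩ := this
    exact Finset.sum_pos' (fun j _ => Complex.normSq_nonneg _)
      ⟨i, Finset.mem_univ i, Complex.normSq_pos.mpr hi⟩
  -- t = v† ρ v is real
  set t : ℂ := star v ⬝ᵥ ρx *ᵥ v with ht
  obtain ⟨r, hr⟩ : ∃ r : ℝ, t = (r : ℝ) := by
    have hst : star t = t := by
      rw [ht, ← Matrix.star_dotProduct_star, star_star, Matrix.star_mulVec, hherm.eq,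
        Matrix.dotProduct_mulVec]
    exact ⟨t.re, Complex.conj_eq_iff_re.mp hst ▸ rfl⟩
  -- P = vv† − (s/N)𝟙 is traceless Hermitian
  set Q : Matrix (Fin N) (Fin N) ℂ := Matrix.vecMulVec v (star v) with hQ
  set d : ℂ := (s : ℂ) / N with hd'
  set P : Matrix (Fin N) (Fin N) ℂ := Q - d • 1 with hP
  have hQherm : Qᴴ = Q := by
    ext i j
    simp [hQ, Matrix.conjTranspose_apply, Matrix.vecMulVec_apply, mul_comm]
  have hPherm : P.IsHermitian := by
    unfold Matrix.IsHermitian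
    rw [hP, Matrix.conjTranspose_sub, hQherm, Matrix.conjTranspose_smul,
      Matrix.conjTranspose_one]
    congr 2
    simp [hd', star_div₀, Complex.conj_ofReal]
  have hQtr : Q.trace = (s : ℂ) := by
    rw [hQ, ← hsC]
    simp only [Matrix.trace, Matrix.diag, Matrix.vecMulVec_apply, dotProduct, Pi.star_apply]
    exact Finset.sum_congr rfl fun i _ => mul_comm _ _
  have hPtr : P.trace = 0 := by
    rw [hP, Matrix.trace_sub, hQtr, Matrix.trace_smul, Matrix.trace_one, hd']
    rw [Fintype.card_fin, smul_eq_mul, div_mul_cancel₀ _ hN, sub_self]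
  obtain ⟨c, hc⟩ := hspan P hPherm hPtr
  -- traces of ρQ, ρP, ρPP
  have hQρ : (ρx * Q).trace = t := by rw [hQ, trace_mul_vecMulVec', ht]
  have hρP : (ρx * P).trace = t - d := by
    rw [hP, Matrix.mul_sub, Matrix.trace_sub, hQρ, Matrix.mul_smul, Matrix.mul_one,
      Matrix.trace_smul, htr, smul_eq_mul, mul_one]
  have hρPP : (ρx * P * P).trace = (s : ℂ) * t - 2 * d * t + d ^ 2 := by
    have hexp : ρx * P * P
        = ρx * (Q * Q) - d • (ρx * Q) - d • (ρx * Q) + (d * d) • ρx := by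
      rw [hP]
      simp only [Matrix.mul_sub, Matrix.sub_mul, Matrix.mul_smul, Matrix.smul_mul,
        Matrix.mul_one, smul_smul, Matrix.mul_assoc, smul_sub, sub_smul]
      abel
    rw [hexp]
    have hQQ : ρx * (Q * Q) = (s : ℂ) • (ρx * Q) := by
      rw [hQ, vecMulVec_mul_vecMulVec', hsC, Matrix.mul_smul]
    rw [hQQ, Matrix.trace_add, Matrix.trace_sub, Matrix.trace_sub, Matrix.trace_smul,
      Matrix.trace_smul, Matrix.trace_smul, hQρ, htr, smul_eq_mul, smul_eq_mul, smul_eq_mul]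
    ring
  -- the quadratic form of M at c
  set w : Fin n → ℂ := fun k => ((c k : ℝ) : ℂ) with hw
  have key := hM.dotProduct_mulVec_nonneg w
  have hA : (ρx * P * P).trace = ∑ i, ∑ j, (c i : ℂ) * (c j : ℂ) * (ρx * O i * O j).trace := by
    rw [hc]
    simp only [Finset.mul_sum, Finset.sum_mul, Matrix.mul_smul, Matrix.smul_mul,
      Matrix.trace_sum, Matrix.trace_smul, smul_smul, smul_eq_mul]
    rw [Finset.sum_comm]
    refine Finset.sum_congr rfl fun i _ => Finset.sum_congr rfl fun j _ => ?_
    rw [Matrix.mul_assoc, Complex.real_smul]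
    push_cast
    ring
  have hB : (ρx * P).trace = ∑ i, (c i : ℂ) * (x i : ℂ) := by
    rw [hc, Finset.mul_sum]
    simp only [Matrix.trace_sum, Matrix.mul_smul, Matrix.trace_smul, Complex.real_smul, hxi]
  have hform : star w ⬝ᵥ ((Matrix.of fun i j : Fin n =>
      (ρx * O i * O j).trace - (x i : ℂ) * (x j : ℂ)) *ᵥ w)
      = (∑ i, ∑ j, (c i : ℂ) * (c j : ℂ) * (ρx * O i * O j).trace)
        - (∑ i, (c i : ℂ) * (x i : ℂ)) * (∑ j, (c j : ℂ) * (x j : ℂ)) := by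
    simp only [dotProduct, Matrix.mulVec, Matrix.of_apply, Pi.star_apply, hw,
      RCLike.star_def, Complex.conj_ofReal, mul_sub, sub_mul, Finset.mul_sum,
      Finset.sum_mul, Finset.sum_sub_distrib]
    congr 1
    · exact Finset.sum_congr rfl fun i _ => Finset.sum_congr rfl fun j _ => by ring
    · exact Finset.sum_congr rfl fun i _ => Finset.sum_congr rfl fun j _ => by ring
  have hval : star w ⬝ᵥ ((Matrix.of fun i j : Fin n =>
      (ρx * O i * O j).trace - (x i : ℂ) * (x j : ℂ)) *ᵥ w) = (s : ℂ) * t - t ^ 2 := by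
    rw [hform, ← hA, ← hB, hρPP, hρP]
    ring
  rw [hval] at key
  have key' : (0 : ℂ) ≤ ((s * r - r ^ 2 : ℝ) : ℂ) := by
    rw [hr] at key
    convert key using 1
    push_cast
    ring
  have hr0 : 0 ≤ r := by
    have := Complex.zero_le_real.mp key'
    nlinarith [hspos]
  rw [hr]
  exact Complex.zero_le_real.mpr hr0
end
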